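/- Conformal factor of order 2 for the triangle space: for every v ∈ ℝ² \ {(1,0), (−1,0)} and every h ∈ ℝ², setting w = ((1,0), v, (−1,0)) ∈ ℝ_*^{2×3} and k = (0, h, 0) ∈ (ℝ²)^3, one has g^2_w(k, k) = f_2(v) · |h|², where f_2(v) = (|e_0(v)| + |e_1(v)|) / (2 l(v)³) + ( 2/(|e_0(v)|²(|e_0(v)| + 2)) + 2(|e_0(v)| + |e_1(v)|)/(|e_0(v)|²|e_1(v)|²) + 2/(|e_1(v)|²(|e_1(v)| + 2)) ) · l(v), with e_0(v) = v − (1,0), e_1(v) = (−1,0) − v, and l(v) = |e_0(v)| + |e_1(v)| + 2. -/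

import Mathlib

open scoped InnerProductSpace BigOperators
open MeasureTheory Filter Topology

noncomputable section

/-- Euclidean space ℝ^d. -/
abbrev Vec (d : ℕ) := EuclideanSpace ℝ (Fin d)

variable {d n : ℕ}

/-- Edges of the discrete closed curve: `e i (v) = v (i+1) - v i`. -/
def edge (v : ZMod n → Vec d) (i : ZMod n) : Vec d := v (i + 1) - v i

/-- Discrete regularity: adjacent vertices are distinct. -/
def IsReg (v : ZMod n → Vec d) : Prop := ∀ i, v i ≠ v (i + 1)

/-- Total length of the discrete curve. -/
def len [NeZero n] (v : ZMod n → Vec d) : ℝ := ∑ i, ‖edge v i‖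

/-- Discrete arc-length derivative of order `m`: odd orders use forward differences
divided by `|e_i|`, even (positive) orders use backward differences divided by the
averaged edge length. -/
def Ds (v h : ZMod n → Vec d) : ℕ → ZMod n → Vec d
  | 0 => h
  | (m + 1) => fun i =>
    if (m + 1) % 2 = 1 then
      (‖edge v i‖)⁻¹ • (Ds v h m (i + 1) - Ds v h m i)
    else
      ((‖edge v i‖ + ‖edge v (i - 1)‖) / 2)⁻¹ • (Ds v h m i - Ds v h m (i - 1))

/-- The weights μ_i in the higher-order term. -/
def mu (v : ZMod n → Vec d) (m : ℕ) (i : ZMod n) : ℝ :=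
  if m % 2 = 1 then ‖edge v i‖ else (‖edge v i‖ + ‖edge v (i - 1)‖) / 2

/-- The discrete Sobolev-type metric of order `m`. -/
def gMet [NeZero n] (m : ℕ) (v h k : ZMod n → Vec d) : ℝ :=
  ∑ i, (⟪h i, k i⟫_ℝ / len v ^ 3 * ((‖edge v i‖ + ‖edge v (i - 1)‖) / 2)
    + ⟪Ds v h m i, Ds v k m i⟫_ℝ / len v ^ ((3 : ℤ) - 2 * (m : ℤ)) * mu v m i)

/-- The point (1,0) ∈ ℝ². -/
def p₁ : Vec 2 := (WithLp.equiv 2 (Fin 2 → ℝ)).symm ![1, 0]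

/-- The point (-1,0) ∈ ℝ². -/
def p₂ : Vec 2 := (WithLp.equiv 2 (Fin 2 → ℝ)).symm ![-1, 0]

/-- The triangle with vertices (1,0), v, (-1,0), as a discrete curve with 3 points. -/
def tri (v : Vec 2) : ZMod 3 → Vec 2 := fun i => if i = 0 then p₁ else if i = 1 then v else p₂

/-- The tangent vector (0, h, 0) to the space of triangles with two fixed vertices. -/
def triTan (h : Vec 2) : ZMod 3 → Vec 2 := fun i => if i = 1 then h else 0

/-- the restriction of `g²` to the space of triangles modulo rotation,
translation and scaling is conformal to the Euclidean metric, with conformal factor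
`f₂(v) = (|e₀| + |e₁|)/(2 l³) + (2/(|e₀|²(|e₀|+2)) + 2(|e₀|+|e₁|)/(|e₀|²|e₁|²)
+ 2/(|e₁|²(|e₁|+2))) l`. -/
theorem conformal_factor_order_two (v : Vec 2) (hv₁ : v ≠ p₁) (hv₂ : v ≠ p₂)
    (h : Vec 2) :
    gMet 2 (tri v) (triTan h) (triTan h) =
      ((‖v - p₁‖ + ‖p₂ - v‖) / (2 * (‖v - p₁‖ + ‖p₂ - v‖ + 2) ^ 3)
        + (2 / (‖v - p₁‖ ^ 2 * (‖v - p₁‖ + 2))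
            + 2 * (‖v - p₁‖ + ‖p₂ - v‖) / (‖v - p₁‖ ^ 2 * ‖p₂ - v‖ ^ 2)
            + 2 / (‖p₂ - v‖ ^ 2 * (‖p₂ - v‖ + 2)))
          * (‖v - p₁‖ + ‖p₂ - v‖ + 2)) * ‖h‖ ^ 2 := by
  have sum3 : ∀ f : ZMod 3 → ℝ, ∑ i, f i = f 0 + f 1 + f 2 := fun f => by
    exact Fin.sum_univ_three (M := ℝ) (fun i : Fin 3 => f i)
  have e0 : edge (tri v) 0 = v - p₁ := rfl
  have e1 : edge (tri v) 1 = p₂ - v := rfl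
  have e2 : edge (tri v) 2 = p₁ - p₂ := rfl
  have hpp : ‖p₁ - p₂‖ = (2:ℝ) := by
    have : p₁ - p₂ = (WithLp.equiv 2 (Fin 2 → ℝ)).symm ![2, 0] := by
      ext i; fin_cases i <;> simp [p₁, p₂]; norm_num
    rw [this, EuclideanSpace.norm_eq]; simp [Fin.sum_univ_two]
  have t0 : triTan h 0 = 0 := rfl
  have t1 : triTan h 1 = h := rfl
  have t2 : triTan h 2 = 0 := rfl
  have t01 : triTan h (0 + 1) = h := rfl
  have t11 : triTan h (1 + 1) = 0 := rfl
  have t21 : triTan h (2 + 1) = 0 := rfl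
  have i0 : ((0 : ZMod 3) - 1) = 2 := rfl
  have i1 : ((1 : ZMod 3) - 1) = 0 := rfl
  have i2 : ((2 : ZMod 3) - 1) = 1 := rfl
  have D1_0 : Ds (tri v) (triTan h) 1 0 = ‖v - p₁‖⁻¹ • h := by
    simp [Ds, t0, t01, e0]
    simp [triTan]
  have D1_1 : Ds (tri v) (triTan h) 1 1 = -(‖p₂ - v‖⁻¹ • h) := by
    simp [Ds, t1, t11, e1]
  have D1_2 : Ds (tri v) (triTan h) 1 2 = 0 := by
    simp [Ds, t2, t21]
  have D2_0 : Ds (tri v) (triTan h) 2 0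
      = (((‖v - p₁‖ + 2) / 2)⁻¹ * ‖v - p₁‖⁻¹) • h := by
    simp [Ds, t0, t01, t2, t21, i0, e0, e2, hpp, smul_smul]
    simp [triTan]
  have D2_1 : Ds (tri v) (triTan h) 2 1
      = -((((‖p₂ - v‖ + ‖v - p₁‖) / 2)⁻¹ * (‖p₂ - v‖⁻¹ + ‖v - p₁‖⁻¹)) • h) := by
    simp [Ds, t0, t01, t1, t11, i1, e0, e1, smul_smul]
    module
  have D2_2 : Ds (tri v) (triTan h) 2 2
      = (((2 + ‖p₂ - v‖) / 2)⁻¹ * ‖p₂ - v‖⁻¹) • h := by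
    simp [Ds, t1, t11, t2, t21, i2, e1, e2, hpp, smul_smul]
  have hlen : len (tri v) = ‖v - p₁‖ + ‖p₂ - v‖ + 2 := by
    rw [len, sum3, e0, e1, e2, hpp]
  have ha : (0:ℝ) < ‖v - p₁‖ := by
    rw [norm_pos_iff, sub_ne_zero]; exact hv₁
  have hb : (0:ℝ) < ‖p₂ - v‖ := by
    rw [norm_pos_iff, sub_ne_zero]; exact fun e => hv₂ e.symm
  rw [gMet, sum3]
  rw [mu, mu, mu]
  simp only [Nat.reduceMod, if_neg (by norm_num : ¬ (2 % 2 = 1))]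
  rw [t0, t1, t2, i0, i1, i2, e0, e1, e2, hpp, hlen, D2_0, D2_1, D2_2]
  simp only [inner_zero_left, real_inner_smul_left, real_inner_smul_right,
    inner_neg_neg, real_inner_self_eq_norm_sq]
  have hl : (0:ℝ) < ‖v - p₁‖ + ‖p₂ - v‖ + 2 := by positivity
  simp only [norm_smul, Real.norm_eq_abs, mul_pow, sq_abs, zero_div, zero_mul,
    zero_add, abs_mul]
  rw [show ((3:ℤ) - 2 * ((2:ℕ):ℤ)) = -1 by norm_num]
  simp only [zpow_neg_one]
  set a := ‖v - p₁‖ with hadef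
  set b := ‖p₂ - v‖ with hbdef
  have h1 : a + 2 ≠ 0 := by positivity
  have h2 : b + 2 ≠ 0 := by positivity
  have h3 : 2 + b ≠ 0 := by positivity
  have h4 : a + b ≠ 0 := by positivity
  have h5 : b + a ≠ 0 := by positivity
  have h6 : a + b + 2 ≠ 0 := by positivity
  have ha' : a ≠ 0 := ne_of_gt ha
  have hb' : b ≠ 0 := ne_of_gt hb
  field_simp
  ring
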